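/- Let u, v be integers with u ≡ ±3 (mod 8) and v ≡ ±3 (mod 8), and suppose u^2 + v^2 has no prime factor congruent to ±3 modulo 8. Then u^2 + v^2 has at least one prime factor p with p ≡ 1 (mod 8) such that p = a^2 + b^2 for integers a, b with a + b ≡ ±3 (mod 8). -/

import Mathlib

/-- Key multiplicative fact mod 8: for Gaussian products with norm ≡ 1 mod 8,
the class of (Re + Im) in {±1} vs {±3} is multiplicative. -/
lemma key_mul8 : ∀ a b c d : ZMod 8, a^2 + b^2 = 1 → c^2 + d^2 = 1 →
    (((a*c - b*d) + (a*d + b*c) = 3 ∨ (a*c - b*d) + (a*d + b*c) = 5) ↔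
      ¬((a + b = 3 ∨ a + b = 5) ↔ (c + d = 3 ∨ c + d = 5))) := by decide

lemma key_neg8 : ∀ a b : ZMod 8, a^2 + b^2 = 1 →
    ((a + b = 3 ∨ a + b = 5) ↔ (a - b = 3 ∨ a - b = 5)) := by decide

lemma dvd_of_dvd_sq_add_sq (p : ℕ) (hp : p.Prime) (h3 : p % 4 = 3) (s t : ℤ)
    (h : (p:ℤ) ∣ s^2 + t^2) : (p:ℤ) ∣ s ∧ (p:ℤ) ∣ t := by
  haveI : Fact p.Prime := ⟨hp⟩
  have h0 : ((s : ZMod p))^2 + (t : ZMod p)^2 = 0 := by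
    have := (ZMod.intCast_zmod_eq_zero_iff_dvd (s^2+t^2) p).mpr h
    push_cast at this
    exact this
  have hs : (s : ZMod p) = 0 := by
    by_contra hs
    have hs2 : (s : ZMod p)^2 ≠ 0 := pow_ne_zero _ hs
    have ht2 : (t : ZMod p)^2 = -((s : ZMod p))^2 := by linear_combination h0
    have hsq : ((t : ZMod p) * (s : ZMod p)⁻¹)^2 = -1 := by
      rw [mul_pow, ht2]
      field_simp
    have : IsSquare (-1 : ZMod p) := ⟨(t : ZMod p) * (s : ZMod p)⁻¹, by rw [← hsq]; ring⟩
    rw [ZMod.exists_sq_eq_neg_one_iff] at this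
    omega
  have ht : (t : ZMod p) = 0 := by
    have : (t : ZMod p)^2 = 0 := by rw [hs] at h0; linear_combination h0
    exact pow_eq_zero_iff (n := 2) (by norm_num) |>.mp this
  exact ⟨(ZMod.intCast_zmod_eq_zero_iff_dvd s p).mp hs,
    (ZMod.intCast_zmod_eq_zero_iff_dvd t p).mp ht⟩

lemma main_descent : ∀ m : ℕ, ∀ s t : ℤ, s^2 + t^2 = (m:ℤ) → (m : ZMod 8) = 1 →
    (∀ p : ℕ, p.Prime → (p:ℤ) ∣ (m:ℤ) → ¬(p % 8 = 3 ∨ p % 8 = 5)) →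
    (((s + t : ℤ) : ZMod 8) = 3 ∨ ((s + t : ℤ) : ZMod 8) = 5) →
    ∃ p : ℕ, p.Prime ∧ p % 8 = 1 ∧ (p:ℤ) ∣ (m:ℤ) ∧
      ∃ a b : ℤ, (p:ℤ) = a^2 + b^2 ∧
        (((a + b : ℤ) : ZMod 8) = 3 ∨ ((a + b : ℤ) : ZMod 8) = 5) := by
  intro m
  induction m using Nat.strong_induction_on with
  | _ m ih =>
  intro s t hst hm8 hfac hP
  have hm1 : m % 8 = 1 := by
    have h := ZMod.val_natCast (n := 8) m
    rw [hm8] at h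
    exact h.symm.trans (by decide : ZMod.val (1 : ZMod 8) = 1)
  rcases eq_or_ne m 1 with rfl | hm_ne
  · exfalso
    have hs1 : s^2 + t^2 = 1 := by exact_mod_cast hst
    have h1 : s^2 ≤ 1 := by nlinarith [sq_nonneg t]
    have h2 : t^2 ≤ 1 := by nlinarith [sq_nonneg s]
    have hs3 : -1 ≤ s := by nlinarith
    have hs4 : s ≤ 1 := by nlinarith
    have ht3 : -1 ≤ t := by nlinarith
    have ht4 : t ≤ 1 := by nlinarith
    interval_cases s <;> interval_cases t <;> revert hP hs1 <;> decide
  · -- m > 1 : take the least prime factor p of m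
    have hm0 : m ≠ 0 := by omega
    have hp : m.minFac.Prime := Nat.minFac_prime hm_ne
    set p := m.minFac with hpdef
    have hpd : p ∣ m := Nat.minFac_dvd m
    have hpd' : (p:ℤ) ∣ (m:ℤ) := Int.natCast_dvd_natCast.mpr hpd
    have hp2 : p ≠ 2 := by
      rintro h
      rw [h] at hpd
      obtain ⟨c, hc⟩ := hpd
      omega
    have hodd : p % 2 = 1 := by
      rcases hp.eq_two_or_odd with h | h
      · exact absurd h hp2
      · exact h
    have hcases : p % 8 = 1 ∨ p % 8 = 7 := by
      have := hfac p hp hpd'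
      omega
    have hppos : (0:ℤ) < (p:ℤ) := by exact_mod_cast hp.pos
    have hp8cast : (p : ZMod 8) = ((p % 8 : ℕ) : ZMod 8) := (ZMod.natCast_mod p 8).symm
    rcases hcases with h1 | h7
    · -- p ≡ 1 (mod 8)
      haveI : Fact p.Prime := ⟨hp⟩
      obtain ⟨a0, b0, hab⟩ := Nat.Prime.sq_add_sq (p := p) (by omega)
      have habZ : ((a0:ℤ))^2 + ((b0:ℤ))^2 = (p:ℤ) := by exact_mod_cast hab
      have hp81 : ((p:ℕ) : ZMod 8) = 1 := by rw [hp8cast, h1]; norm_num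
      have habm : ((a0:ℤ) : ZMod 8)^2 + ((b0:ℤ) : ZMod 8)^2 = 1 := by
        have := congrArg (Int.cast : ℤ → ZMod 8) habZ
        push_cast at this ⊢
        rw [this]
        exact_mod_cast hp81
      by_cases hPab : (((a0:ℤ) + (b0:ℤ) : ℤ) : ZMod 8) = 3 ∨ (((a0:ℤ) + (b0:ℤ) : ℤ) : ZMod 8) = 5
      · exact ⟨p, hp, h1, hpd', (a0:ℤ), (b0:ℤ), habZ.symm, hPab⟩
      · -- descent through the Gaussian prime a0 + b0 i
        have hpZ : Prime (p:ℤ) := Nat.prime_iff_prime_int.mp hp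
        have hdiv : (p:ℤ) ∣ ((a0:ℤ)*t - (b0:ℤ)*s) * ((a0:ℤ)*t + (b0:ℤ)*s) := by
          have he : ((a0:ℤ)*t - (b0:ℤ)*s) * ((a0:ℤ)*t + (b0:ℤ)*s)
              = (a0:ℤ)^2*(s^2+t^2) - s^2*((a0:ℤ)^2+(b0:ℤ)^2) := by ring
          rw [he, hst, habZ]
          exact dvd_sub (hpd'.mul_left _) (dvd_mul_left _ _)
        have hkey : ∃ B : ℤ, (a0:ℤ)^2 + B^2 = (p:ℤ) ∧ (p:ℤ) ∣ ((a0:ℤ)*t - B*s) ∧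
            ¬((((a0:ℤ) + B : ℤ) : ZMod 8) = 3 ∨ (((a0:ℤ) + B : ℤ) : ZMod 8) = 5) := by
          rcases (hpZ.dvd_mul.mp hdiv) with h | h
          · exact ⟨(b0:ℤ), habZ, h, hPab⟩
          · refine ⟨-(b0:ℤ), by linear_combination habZ, by
              have : (a0:ℤ)*t - (-(b0:ℤ))*s = (a0:ℤ)*t + (b0:ℤ)*s := by ring
              rw [this]; exact h, ?_⟩
            intro hcon
            apply hPab
            have hneg := key_neg8 ((a0:ℤ) : ZMod 8) ((b0:ℤ) : ZMod 8) habm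
            push_cast at hcon hneg ⊢
            rcases hcon with h | h
            · exact hneg.mpr (Or.inl (by linear_combination h))
            · exact hneg.mpr (Or.inr (by linear_combination h))
        obtain ⟨B, hab', hdvd1, hPab'⟩ := hkey
        have habm' : ((a0:ℤ) : ZMod 8)^2 + ((B : ℤ) : ZMod 8)^2 = 1 := by
          have := congrArg (Int.cast : ℤ → ZMod 8) hab'
          push_cast at this ⊢
          rw [this]
          exact_mod_cast hp81
        have hds : (p:ℤ) ∣ (a0:ℤ)*s + B*t := by
          have hsq : (p:ℤ) ∣ ((a0:ℤ)*s + B*t)^2 := by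
            have he : ((a0:ℤ)*s + B*t)^2
                = ((a0:ℤ)^2 + B^2)*(s^2+t^2) - ((a0:ℤ)*t - B*s)^2 := by ring
            rw [he, hab', hst]
            exact dvd_sub (Dvd.intro _ rfl) (hdvd1.pow (by norm_num))
          exact hpZ.dvd_of_dvd_pow hsq
        obtain ⟨s', hs'⟩ := hds
        obtain ⟨t', ht'⟩ := hdvd1
        obtain ⟨m', hm'⟩ := hpd
        have hst' : s'^2 + t'^2 = (m' : ℤ) := by
          have h2 : (p:ℤ)^2 * (s'^2 + t'^2) = (p:ℤ)^2 * (m':ℤ) := by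
            have e1 : (p:ℤ)^2 * (s'^2 + t'^2) = ((a0:ℤ)*s + B*t)^2 + ((a0:ℤ)*t - B*s)^2 := by
              rw [hs', ht']; ring
            have e2 : ((a0:ℤ)*s + B*t)^2 + ((a0:ℤ)*t - B*s)^2
                = ((a0:ℤ)^2 + B^2)*(s^2+t^2) := by ring
            have e3 : ((m:ℕ):ℤ) = (p:ℤ) * (m':ℤ) := by exact_mod_cast hm'
            rw [e1, e2, hab', hst, e3]; ring
          exact mul_left_cancel₀ (by positivity) h2
        have hrec_s : s = (a0:ℤ)*s' - B*t' := by
          have : (p:ℤ) * s = (p:ℤ) * ((a0:ℤ)*s' - B*t') := by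
            calc (p:ℤ) * s = ((a0:ℤ)^2 + B^2) * s := by rw [hab']
              _ = (a0:ℤ)*((a0:ℤ)*s + B*t) - B*((a0:ℤ)*t - B*s) := by ring
              _ = (a0:ℤ)*((p:ℤ)*s') - B*((p:ℤ)*t') := by rw [← hs', ← ht']
              _ = (p:ℤ) * ((a0:ℤ)*s' - B*t') := by ring
          exact mul_left_cancel₀ (by positivity) this
        have hrec_t : t = (a0:ℤ)*t' + B*s' := by
          have : (p:ℤ) * t = (p:ℤ) * ((a0:ℤ)*t' + B*s') := by
            calc (p:ℤ) * t = ((a0:ℤ)^2 + B^2) * t := by rw [hab']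
              _ = (a0:ℤ)*((a0:ℤ)*t - B*s) + B*((a0:ℤ)*s + B*t) := by ring
              _ = (a0:ℤ)*((p:ℤ)*t') + B*((p:ℤ)*s') := by rw [← hs', ← ht']
              _ = (p:ℤ) * ((a0:ℤ)*t' + B*s') := by ring
          exact mul_left_cancel₀ (by positivity) this
        have hm'8 : (m' : ZMod 8) = 1 := by
          have e : (m : ZMod 8) = (p : ZMod 8) * (m' : ZMod 8) := by
            rw [hm']; push_cast; ring
          rw [hm8, hp81, one_mul] at e
          exact e.symm
        have hst'm : ((s' : ℤ) : ZMod 8)^2 + ((t' : ℤ) : ZMod 8)^2 = 1 := by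
          have := congrArg (Int.cast : ℤ → ZMod 8) hst'
          push_cast at this ⊢
          rw [this]
          exact_mod_cast hm'8
        have hP' : ((s' + t' : ℤ) : ZMod 8) = 3 ∨ ((s' + t' : ℤ) : ZMod 8) = 5 := by
          have hkm := key_mul8 ((a0:ℤ) : ZMod 8) (B : ZMod 8) ((s':ℤ) : ZMod 8)
            ((t':ℤ) : ZMod 8) habm' hst'm
          have hsum : ((s + t : ℤ) : ZMod 8)
              = (((a0:ℤ) : ZMod 8) * ((s':ℤ) : ZMod 8) - (B : ZMod 8) * ((t':ℤ) : ZMod 8))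
              + (((a0:ℤ) : ZMod 8) * ((t':ℤ) : ZMod 8) + (B : ZMod 8) * ((s':ℤ) : ZMod 8)) := by
            rw [hrec_s, hrec_t]; push_cast; ring
          rw [hsum] at hP
          have hx := hkm.mp hP
          by_contra hcon
          apply hx
          constructor
          · intro hAB
            exfalso; apply hPab'
            push_cast
            exact_mod_cast hAB
          · intro hST
            exfalso; apply hcon
            push_cast at hST ⊢
            exact_mod_cast hST
        have hm'lt : m' < m := by
          have hm'pos : 0 < m' := by
            rcases Nat.eq_zero_or_pos m' with h | h
            · exfalso; apply hm0; rw [hm', h, mul_zero]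
            · exact h
          have : 2 * m' ≤ p * m' := Nat.mul_le_mul_right m' hp.two_le
          omega
        have hfac' : ∀ q : ℕ, q.Prime → (q:ℤ) ∣ (m':ℤ) → ¬(q % 8 = 3 ∨ q % 8 = 5) := by
          intro q hq hqd
          exact hfac q hq (hqd.trans (Int.natCast_dvd_natCast.mpr ⟨p, by rw [hm']; ring⟩))
        obtain ⟨q, hq, hq8, hqd, rest⟩ := ih m' hm'lt s' t' hst' hm'8 hfac' hP'
        exact ⟨q, hq, hq8, hqd.trans (Int.natCast_dvd_natCast.mpr ⟨p, by rw [hm']; ring⟩), rest⟩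
    · -- p ≡ 7 (mod 8) : then p divides both s and t
      have h34 : p % 4 = 3 := by omega
      obtain ⟨hs, ht⟩ := dvd_of_dvd_sq_add_sq p hp h34 s t (by rw [hst]; exact hpd')
      obtain ⟨s', hs'⟩ := hs
      obtain ⟨t', ht'⟩ := ht
      have hdvd2 : p^2 ∣ m := by
        have : ((p:ℤ))^2 ∣ (m:ℤ) := ⟨s'^2 + t'^2, by rw [← hst, hs', ht']; ring⟩
        have h2 : ((p^2 : ℕ) : ℤ) ∣ (m:ℤ) := by push_cast; exact this
        exact_mod_cast h2
      obtain ⟨m', hm'⟩ := hdvd2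
      have hst' : s'^2 + t'^2 = (m' : ℤ) := by
        have h2 : (p:ℤ)^2 * (s'^2 + t'^2) = (p:ℤ)^2 * (m':ℤ) := by
          have e3 : ((m:ℕ):ℤ) = (p:ℤ)^2 * (m':ℤ) := by exact_mod_cast hm'
          calc (p:ℤ)^2 * (s'^2 + t'^2) = ((p:ℤ)*s')^2 + ((p:ℤ)*t')^2 := by ring
            _ = s^2 + t^2 := by rw [← hs', ← ht']
            _ = ((m:ℕ):ℤ) := hst
            _ = (p:ℤ)^2 * (m':ℤ) := e3
        exact mul_left_cancel₀ (by positivity) h2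
      have hp7 : (p : ZMod 8) = 7 := by rw [hp8cast, h7]; norm_num
      have h49 : ((p : ZMod 8))^2 = 1 := by rw [hp7]; decide
      have hm'8 : (m' : ZMod 8) = 1 := by
        have e : (m : ZMod 8) = (p : ZMod 8)^2 * (m' : ZMod 8) := by
          rw [hm']; push_cast; ring
        rw [hm8, h49, one_mul] at e
        exact e.symm
      have hP' : ((s' + t' : ℤ) : ZMod 8) = 3 ∨ ((s' + t' : ℤ) : ZMod 8) = 5 := by
        have hsum0 : s + t = (p:ℤ) * (s' + t') := by rw [hs', ht']; ring
        have hsum : ((s + t : ℤ) : ZMod 8) = 7 * ((s' + t' : ℤ) : ZMod 8) := by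
          calc ((s + t : ℤ) : ZMod 8) = (((p:ℤ) * (s' + t') : ℤ) : ZMod 8) := by rw [hsum0]
            _ = (p : ZMod 8) * ((s' + t' : ℤ) : ZMod 8) := by push_cast; ring
            _ = 7 * ((s' + t' : ℤ) : ZMod 8) := by rw [hp7]
        rw [hsum] at hP
        revert hP
        generalize ((s' + t' : ℤ) : ZMod 8) = x
        revert x
        decide
      have hm'lt : m' < m := by
        have hm'pos : 0 < m' := by
          rcases Nat.eq_zero_or_pos m' with h | h
          · exfalso; apply hm0; rw [hm', h, mul_zero]
          · exact h
        have h4 : 4 ≤ p^2 := by nlinarith [hp.two_le]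
        have : 4 * m' ≤ p^2 * m' := Nat.mul_le_mul_right m' h4
        omega
      have hfac' : ∀ q : ℕ, q.Prime → (q:ℤ) ∣ (m':ℤ) → ¬(q % 8 = 3 ∨ q % 8 = 5) := by
        intro q hq hqd
        exact hfac q hq (hqd.trans (Int.natCast_dvd_natCast.mpr ⟨p^2, by rw [hm']; ring⟩))
      obtain ⟨q, hq, hq8, hqd, rest⟩ := ih m' hm'lt s' t' hst' hm'8 hfac' hP'
      exact ⟨q, hq, hq8, hqd.trans (Int.natCast_dvd_natCast.mpr ⟨p^2, by rw [hm']; ring⟩), rest⟩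



theorem sum_sq_pm3_has_special_prime_factor (u v : ℤ)
    (hu : u ≡ 3 [ZMOD 8] ∨ u ≡ -3 [ZMOD 8])
    (hv : v ≡ 3 [ZMOD 8] ∨ v ≡ -3 [ZMOD 8])
    (hfac : ∀ p : ℕ, p.Prime → (p : ℤ) ∣ (u^2 + v^2) →
      ¬ (p % 8 = 3 ∨ p % 8 = 5)) :
    ∃ p : ℕ, p.Prime ∧ p % 8 = 1 ∧ (p : ℤ) ∣ (u^2 + v^2) ∧
      ∃ a b : ℤ, (p : ℤ) = a^2 + b^2 ∧
        (a + b ≡ 3 [ZMOD 8] ∨ a + b ≡ -3 [ZMOD 8]) := by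
  -- extract u = 8k + eu, v = 8l + ev with eu, ev ∈ {3, -3}
  obtain ⟨eu, heu, k, hk⟩ : ∃ e : ℤ, (e = 3 ∨ e = -3) ∧ ∃ k : ℤ, u = 8*k + e := by
    rcases hu with h | h
    · obtain ⟨k, hk⟩ := (Int.modEq_iff_dvd.mp h)
      exact ⟨3, Or.inl rfl, -k, by omega⟩
    · obtain ⟨k, hk⟩ := (Int.modEq_iff_dvd.mp h)
      exact ⟨-3, Or.inr rfl, -k, by omega⟩
  obtain ⟨ev, hev, l, hl⟩ : ∃ e : ℤ, (e = 3 ∨ e = -3) ∧ ∃ l : ℤ, v = 8*l + e := by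
    rcases hv with h | h
    · obtain ⟨l, hl⟩ := (Int.modEq_iff_dvd.mp h)
      exact ⟨3, Or.inl rfl, -l, by omega⟩
    · obtain ⟨l, hl⟩ := (Int.modEq_iff_dvd.mp h)
      exact ⟨-3, Or.inr rfl, -l, by omega⟩
  have h2s : (2:ℤ) ∣ (u + v) := by rcases heu with rfl | rfl <;> rcases hev with rfl | rfl <;> omega
  obtain ⟨s, hs⟩ := h2s
  have h2t : (2:ℤ) ∣ (v - u) := by rcases heu with rfl | rfl <;> rcases hev with rfl | rfl <;> omega
  obtain ⟨t, ht⟩ := h2t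
  have hvst : v = s + t := by omega
  have hust : u = s - t := by omega
  have hnn : (0:ℤ) ≤ s^2 + t^2 := by positivity
  obtain ⟨m, hm⟩ : ∃ m : ℕ, (m : ℤ) = s^2 + t^2 := ⟨(s^2+t^2).toNat, Int.toNat_of_nonneg hnn⟩
  have hmuv : u^2 + v^2 = 2 * (m:ℤ) := by rw [hm, hust, hvst]; ring
  -- m ≡ 1 (mod 8)
  have h8 : (8:ℤ) ∣ (m:ℤ) - 1 := by
    rcases heu with rfl | rfl <;> rcases hev with rfl | rfl
    · refine ⟨4*k^2 + 3*k + 4*l^2 + 3*l + 1, ?_⟩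
      have h16 : 2*(m:ℤ) - 2 = 16 * (4*k^2 + 3*k + 4*l^2 + 3*l + 1) := by
        linear_combination -hmuv + (u + 8*k + 3)*hk + (v + 8*l + 3)*hl
      linarith
    · refine ⟨4*k^2 + 3*k + 4*l^2 - 3*l + 1, ?_⟩
      have h16 : 2*(m:ℤ) - 2 = 16 * (4*k^2 + 3*k + 4*l^2 - 3*l + 1) := by
        linear_combination -hmuv + (u + 8*k + 3)*hk + (v + 8*l - 3)*hl
      linarith
    · refine ⟨4*k^2 - 3*k + 4*l^2 + 3*l + 1, ?_⟩
      have h16 : 2*(m:ℤ) - 2 = 16 * (4*k^2 - 3*k + 4*l^2 + 3*l + 1) := by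
        linear_combination -hmuv + (u + 8*k - 3)*hk + (v + 8*l + 3)*hl
      linarith
    · refine ⟨4*k^2 - 3*k + 4*l^2 - 3*l + 1, ?_⟩
      have h16 : 2*(m:ℤ) - 2 = 16 * (4*k^2 - 3*k + 4*l^2 - 3*l + 1) := by
        linear_combination -hmuv + (u + 8*k - 3)*hk + (v + 8*l - 3)*hl
      linarith
  have hm8 : (m : ZMod 8) = 1 := by
    have h0 : (((m:ℤ) - 1 : ℤ) : ZMod 8) = 0 :=
      (ZMod.intCast_zmod_eq_zero_iff_dvd _ 8).mpr h8
    push_cast at h0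
    linear_combination h0
  -- s + t = v ≡ ±3 (mod 8)
  have hP : ((s + t : ℤ) : ZMod 8) = 3 ∨ ((s + t : ℤ) : ZMod 8) = 5 := by
    rw [← hvst]
    rcases hv with h | h
    · left
      have := (ZMod.intCast_eq_intCast_iff v 3 8).mpr h
      rw [this]; norm_num
    · right
      have := (ZMod.intCast_eq_intCast_iff v (-3) 8).mpr h
      rw [this]; decide
  have hfacm : ∀ p : ℕ, p.Prime → (p:ℤ) ∣ (m:ℤ) → ¬(p % 8 = 3 ∨ p % 8 = 5) := by
    intro q hq hqd
    exact hfac q hq (by rw [hmuv]; exact hqd.mul_left 2)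
  obtain ⟨p, hp, hp8, hpd, a, b, hab, hPab⟩ := main_descent m s t hm.symm hm8 hfacm hP
  refine ⟨p, hp, hp8, by rw [hmuv]; exact hpd.mul_left 2, a, b, hab, ?_⟩
  rcases hPab with h | h
  · left
    have := (ZMod.intCast_eq_intCast_iff (a+b) 3 8).mp (by rw [h]; norm_num)
    exact_mod_cast this
  · right
    have := (ZMod.intCast_eq_intCast_iff (a+b) (-3) 8).mp (by rw [h]; decide)
    exact_mod_cast this
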